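/- Let L be a countable relational language, M an ultrahomogeneous L-structure, ā ∈ Age(M), and let Φ be a set of L-formulas with free variables among x̄, ȳ (|ȳ| = |ā|). Suppose that for every B ∈ Age(M) and every 2-colouring of Binom(M,ā) that is externally definable by a single formula from Φ, there is a monochromatic copy of B in M. Then the same conclusion holds for every 2-colouring of Binom(M,ā) that is externally definable by a formula that is a Boolean combination of formulas from Φ. (Lemma 3.10.) -/

import Mathlib

open FirstOrder FirstOrder.Language CategoryTheory

universe u v w

namespace EDRP

/-- The colouring `χ` of the copies of `A` in `M` (copies identified with embeddings
`A ↪[L] M`) is externally definable by the formulas `φ i`: there are an elementary extension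
`N ⪰ M` and a parameter tuple `ē` in `N` such that `χ(f(ā)) = i` iff `N ⊨ φ i (ē, f(ā))`. -/
def ExtDefinableBy (L : FirstOrder.Language.{u, v}) (M : Type w) [L.Structure M]
    (A : Type w) [L.Structure A]
    {k e : ℕ} (φ : Fin k → L.Formula (Fin e ⊕ A)) (χ : (A ↪[L] M) → Fin k) : Prop :=
  ∃ (N : Bundled.{w} L.Structure) (emb : M ↪ₑ[L] N) (eb : Fin e → N),
    ∀ (f : A ↪[L] M) (i : Fin k),
      χ f = i ↔ (φ i).Realize (Sum.elim eb fun a => emb (f a))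

/-- `χ` is an externally definable `k`-colouring of the copies of `A` in `M`. -/
def ExtDefinable (L : FirstOrder.Language.{u, v}) (M : Type w) [L.Structure M]
    (A : Type w) [L.Structure A] {k : ℕ} (χ : (A ↪[L] M) → Fin k) : Prop :=
  ∃ (e : ℕ) (φ : Fin k → L.Formula (Fin e ⊕ A)), ExtDefinableBy L M A φ χ

/-- The copy of `B` in `M` given by the embedding `g` is `χ`-monochromatic: `χ` is constant
on the copies of `A` lying inside the image of `g`. -/
def MonochromaticOn (L : FirstOrder.Language.{u, v}) (M : Type w) [L.Structure M]
    (A B : Type w) [L.Structure A] [L.Structure B]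
    {k : ℕ} (χ : (A ↪[L] M) → Fin k) (g : B ↪[L] M) : Prop :=
  ∀ f₁ f₂ : A ↪[L] M, Set.range (f₁ : A → M) ⊆ Set.range (g : B → M) →
    Set.range (f₂ : A → M) ⊆ Set.range (g : B → M) → χ f₁ = χ f₂

/-- `M` has the externally definable `ā`-Ramsey property, where `ā` enumerates `A`:
for every `k ≥ 1`, every `B` in the age of `M` and every externally definable `k`-colouring `χ`
of the copies of `A` in `M`, there is a `χ`-monochromatic copy of `B` in `M`. -/
def ExtDefARamsey (L : FirstOrder.Language.{u, v}) (M : Type w) [L.Structure M]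
    (A : Type w) [L.Structure A] : Prop :=
  ∀ (k : ℕ), 1 ≤ k → ∀ (B : Type w) [L.Structure B], Finite B → Nonempty (B ↪[L] M) →
    ∀ χ : (A ↪[L] M) → Fin k, ExtDefinable L M A χ →
      ∃ g : B ↪[L] M, MonochromaticOn L M A B χ g

/-- `M` has the externally definable Ramsey property. -/
def ExtDefRamsey (L : FirstOrder.Language.{u, v}) (M : Type w) [L.Structure M] : Prop :=
  ∀ (A : Type w) [L.Structure A], Finite A → Nonempty (A ↪[L] M) → ExtDefARamsey L M A

/-- The 2-colouring `χ` of the copies of `A` in `M` is externally definable by the single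
formula `φ`, where colour `0` corresponds to satisfaction of `φ`. -/
def ExtDefinableBy2 (L : FirstOrder.Language.{u, v}) (M : Type w) [L.Structure M]
    (A : Type w) [L.Structure A] {e : ℕ}
    (φ : L.Formula (Fin e ⊕ A)) (χ : (A ↪[L] M) → Fin 2) : Prop :=
  ∃ (N : Bundled.{w} L.Structure) (emb : M ↪ₑ[L] N) (eb : Fin e → N),
    ∀ f : A ↪[L] M, χ f = 0 ↔ φ.Realize (Sum.elim eb fun a => emb (f a))

/-- Boolean combinations (via `¬` and `∧`) of formulas from `Φ`. -/
inductive BoolComb {L : FirstOrder.Language.{u, v}} {α : Type*}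
    (Φ : Set (L.Formula α)) : L.Formula α → Prop
  | base {φ : L.Formula α} : φ ∈ Φ → BoolComb Φ φ
  | not {φ : L.Formula α} : BoolComb Φ φ → BoolComb Φ φ.not
  | inf {φ ψ : L.Formula α} : BoolComb Φ φ → BoolComb Φ ψ → BoolComb Φ (φ ⊓ ψ)

section Aux

open Filter

private lemma fin2_eq_of_iff {x y : Fin 2} (h : x = 0 ↔ y = 0) : x = y := by
  fin_cases x <;> fin_cases y <;> simp_all

private lemma fin2_ne_zero {x : Fin 2} (h : ¬ x = 0) : x = 1 := by
  fin_cases x <;> simp_all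

private lemma finite_embs {L : FirstOrder.Language.{u, v}} {M : Type w} [L.Structure M]
    {A : Type w} [L.Structure A] [Finite A] {t : Set M} (ht : t.Finite) :
    {f : A ↪[L] M | Set.range (f : A → M) ⊆ t}.Finite := by
  have h1 : {g : A → M | ∀ a, g a ∈ t}.Finite := by
    refine (Set.Finite.pi (t := fun _ : A => t) fun _ => ht).subset ?_
    intro g hg
    simp only [Set.mem_pi, Set.mem_univ, forall_true_left]
    exact hg
  have h2 := h1.preimage (f := fun f : A ↪[L] M => (f : A → M))
    (Set.injOn_of_injective (DFunLike.coe_injective))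
  refine h2.subset ?_
  intro f hf
  simp only [Set.mem_preimage, Set.mem_setOf_eq]
  exact fun a => hf (Set.mem_range_self a)

private lemma localize {L : FirstOrder.Language.{u, v}} {M : Type w} [L.Structure M]
    [Nonempty M] {A : Type w} [L.Structure A] [Finite A]
    {B : Type w} [L.Structure B] [Finite B] {e : ℕ} (φ : L.Formula (Fin e ⊕ A))
    (IH : ∀ χ : (A ↪[L] M) → Fin 2, ExtDefinableBy2 L M A φ χ →
      ∃ g : B ↪[L] M, MonochromaticOn L M A B χ g) :
    ∃ s : Finset M, ∀ χ : (A ↪[L] M) → Fin 2, ExtDefinableBy2 L M A φ χ →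
      ∃ g : B ↪[L] M, Set.range (g : B → M) ⊆ ↑s ∧ MonochromaticOn L M A B χ g := by
  classical
  by_contra hcon
  push_neg at hcon
  choose χs hP hbad using hcon
  choose Ns embs ebs hdef using hP
  let U : Ultrafilter (Finset M) := Ultrafilter.of Filter.atTop
  haveI : ∀ s : Finset M, Nonempty (Ns s) := fun s => ⟨embs s (Classical.arbitrary M)⟩
  let NP : Type w := (U : Filter (Finset M)).Product fun s => (Ns s : Type w)
  letI iNP : L.Structure NP :=
    (inferInstance : L.Structure ((U : Filter (Finset M)).Product fun s => (Ns s : Type w)))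
  let embp : M → NP := fun m => (↑(fun s => embs s m) : NP)
  have hembp : ∀ ⦃n : ℕ⦄ (θ : L.Formula (Fin n)) (x : Fin n → M),
      θ.Realize (fun i => embp (x i)) ↔ θ.Realize x := by
    intro n θ x
    have h1 := Ultraproduct.realize_formula_cast (u := U) (M := fun s => (Ns s : Type w)) θ
      (fun i s => embs s (x i))
    have h2 : ∀ s, ((θ.Realize fun i => embs s (x i)) ↔ θ.Realize x) := fun s =>
      (embs s).map_formula θ x
    refine h1.trans ?_
    constructor
    · intro hev
      obtain ⟨s, hs⟩ := hev.exists
      exact (h2 s).1 hs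
    · intro hx
      exact Filter.Eventually.of_forall fun s => (h2 s).2 hx
  let EE : M ↪ₑ[L] NP := ⟨embp, hembp⟩
  let ebp : Fin e → NP := fun i => (↑(fun s => ebs s i) : NP)
  let χP : (A ↪[L] M) → Fin 2 := fun f =>
    if φ.Realize (Sum.elim ebp fun a => embp (f a)) then 0 else 1
  have hχP0 : ∀ f, (χP f = 0 ↔ φ.Realize (Sum.elim ebp fun a => embp (f a))) := by
    intro f
    by_cases hr : φ.Realize (Sum.elim ebp fun a => embp (f a)) <;> simp [χP, hr]
  have hkey : ∀ f, (χP f = 0 ↔ ∀ᶠ s in (U : Filter (Finset M)), χs s f = 0) := by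
    intro f
    rw [hχP0 f]
    have heq : (Sum.elim ebp fun a => embp (f a)) =
        fun i => (↑(fun s => Sum.elim (ebs s) (fun a => embs s (f a)) i) : NP) := by
      funext i; cases i <;> rfl
    rw [heq]
    have h1 := Ultraproduct.realize_formula_cast (u := U) (M := fun s => (Ns s : Type w)) φ
      (fun i s => Sum.elim (ebs s) (fun a => embs s (f a)) i)
    refine h1.trans (Filter.eventually_congr (Filter.Eventually.of_forall fun s => ?_))
    exact (hdef s f).symm
  obtain ⟨g, hg⟩ := IH χP ⟨⟨NP, iNP⟩, EE, ebp, fun f => hχP0 f⟩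
  have hper : ∀ f : A ↪[L] M, ∀ᶠ s in (U : Filter (Finset M)), χs s f = χP f := by
    intro f
    by_cases h0 : χP f = 0
    · simp only [h0]
      exact (hkey f).1 h0
    · have h1 : χP f = 1 := fin2_ne_zero h0
      have h2 : ¬ ∀ᶠ s in (U : Filter (Finset M)), χs s f = 0 := fun hev => h0 ((hkey f).2 hev)
      have h3 : ∀ᶠ s in (U : Filter (Finset M)), ¬ χs s f = 0 :=
        (Ultrafilter.eventually_not).2 h2
      simp only [h1]
      exact h3.mono fun s hs => fin2_ne_zero hs
  have hFr : Set.Finite {f : A ↪[L] M | Set.range (f : A → M) ⊆ Set.range (g : B → M)} :=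
    finite_embs (Set.finite_range _)
  have hAll : ∀ᶠ s in (U : Filter (Finset M)),
      ∀ f ∈ {f : A ↪[L] M | Set.range (f : A → M) ⊆ Set.range (g : B → M)}, χs s f = χP f :=
    (Filter.eventually_all_finite hFr).2 fun f _ => hper f
  have hT : ∀ᶠ s in (U : Filter (Finset M)),
      (Set.finite_range (g : B → M)).toFinset ≤ s :=
    (Filter.eventually_atTop.2 ⟨_, fun s hs => hs⟩).filter_mono (Ultrafilter.of_le _)
  obtain ⟨s, hs1, hs2⟩ := (hAll.and hT).exists
  refine hbad s g ?_ ?_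
  · intro x hx
    have hx' : x ∈ (Set.finite_range (g : B → M)).toFinset := by
      simpa using hx
    exact hs2 hx'
  · intro f₁ f₂ hf₁ hf₂
    rw [hs1 f₁ hf₁, hs1 f₂ hf₂]
    exact hg f₁ f₂ hf₁ hf₂

end Aux

/-- **Lemma 3.10.** If an ultrahomogeneous `M` has the `ā`-Ramsey property for all 2-colourings
externally defined by a formula from `Φ`, then it has the `ā`-Ramsey property for all
2-colourings externally defined by a Boolean combination of formulas from `Φ`. -/
theorem boolComb_ramsey (L : FirstOrder.Language.{u, v}) [L.IsRelational]
    [Countable L.Symbols] (M : Type w) [L.Structure M] (hM : L.IsUltrahomogeneous M)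
    (A : Type w) [L.Structure A] (hAfin : Finite A) (hA : Nonempty (A ↪[L] M))
    (e : ℕ) (Φ : Set (L.Formula (Fin e ⊕ A)))
    (h : ∀ (B : Type w) [L.Structure B], Finite B → Nonempty (B ↪[L] M) →
      ∀ χ : (A ↪[L] M) → Fin 2, (∃ φ ∈ Φ, ExtDefinableBy2 L M A φ χ) →
        ∃ g : B ↪[L] M, MonochromaticOn L M A B χ g) :
    ∀ (B : Type w) [L.Structure B], Finite B → Nonempty (B ↪[L] M) →
      ∀ χ : (A ↪[L] M) → Fin 2, (∃ ψ, BoolComb Φ ψ ∧ ExtDefinableBy2 L M A ψ χ) →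
        ∃ g : B ↪[L] M, MonochromaticOn L M A B χ g := by
  classical
  haveI := hAfin
  rcases isEmpty_or_nonempty M with hM0 | hM0
  · -- degenerate case: `M` empty, so any two embeddings `A ↪ M` are equal
    intro B iB hBfin hBemb χ _
    obtain ⟨g⟩ := hBemb
    refine ⟨g, fun f₁ f₂ _ _ => ?_⟩
    have hAe : IsEmpty A := ⟨fun a => (hM0.false ((Classical.choice hA) a)).elim⟩
    have : f₁ = f₂ := by
      ext a
      exact (hAe.false a).elim
    rw [this]
  suffices H : ∀ ψ', BoolComb Φ ψ' → ∀ (B : Type w) [L.Structure B], Finite B →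
      Nonempty (B ↪[L] M) → ∀ χ : (A ↪[L] M) → Fin 2, ExtDefinableBy2 L M A ψ' χ →
      ∃ g : B ↪[L] M, MonochromaticOn L M A B χ g by
    intro B iB hBfin hBemb χ hχ
    obtain ⟨ψ, hbc, hdef⟩ := hχ
    exact H ψ hbc B hBfin hBemb χ hdef
  intro ψ hbc
  induction hbc with
  | @base φ hφ =>
    intro B iB hBf hBe χ hχ
    exact h B hBf hBe χ ⟨φ, hφ, hχ⟩
  | @not ψ hψ ih =>
    intro B iB hBf hBe χ hχ
    obtain ⟨N, emb, eb, hc⟩ := hχ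
    set χ' : (A ↪[L] M) → Fin 2 := fun f =>
      if ψ.Realize (Sum.elim eb fun a => emb (f a)) then 0 else 1 with hχ'def
    have hd' : ∀ f, (χ' f = 0 ↔ ψ.Realize (Sum.elim eb fun a => emb (f a))) := by
      intro f
      by_cases hr : ψ.Realize (Sum.elim eb fun a => emb (f a)) <;> simp [hχ'def, hr]
    obtain ⟨g, hg⟩ := ih B hBf hBe χ' ⟨N, emb, eb, hd'⟩
    refine ⟨g, fun f₁ f₂ h1 h2 => ?_⟩
    have e12 := hg f₁ f₂ h1 h2
    have key : ∀ f, (χ f = 0 ↔ ¬ (χ' f = 0)) := by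
      intro f
      rw [hc f, Formula.realize_not, hd' f]
    exact fin2_eq_of_iff (by rw [key f₁, key f₂, e12])
  | @inf φ₁ φ₂ h₁ h₂ ih1 ih2 =>
    intro B iB hBf hBe χ hχ
    obtain ⟨N, emb, eb, hc⟩ := hχ
    set χ₁ : (A ↪[L] M) → Fin 2 := fun f =>
      if φ₁.Realize (Sum.elim eb fun a => emb (f a)) then 0 else 1 with hχ₁def
    set χ₂ : (A ↪[L] M) → Fin 2 := fun f =>
      if φ₂.Realize (Sum.elim eb fun a => emb (f a)) then 0 else 1 with hχ₂def
    have hd₁ : ∀ f, (χ₁ f = 0 ↔ φ₁.Realize (Sum.elim eb fun a => emb (f a))) := by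
      intro f
      by_cases hr : φ₁.Realize (Sum.elim eb fun a => emb (f a)) <;> simp [hχ₁def, hr]
    have hd₂ : ∀ f, (χ₂ f = 0 ↔ φ₂.Realize (Sum.elim eb fun a => emb (f a))) := by
      intro f
      by_cases hr : φ₂.Realize (Sum.elim eb fun a => emb (f a)) <;> simp [hχ₂def, hr]
    have hcc : ∀ f, (χ f = 0 ↔ (χ₁ f = 0 ∧ χ₂ f = 0)) := by
      intro f
      rw [hc f, Formula.realize_inf, hd₁ f, hd₂ f]
    haveI := hBf
    -- localize the `φ₁`-Ramsey property to a finite set `s`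
    obtain ⟨s, hs⟩ := localize (M := M) φ₁ (fun χ' h' => ih1 B hBf hBe χ' h')
    -- the finite substructure on `s` (the language is relational)
    let S : L.Substructure M :=
      { carrier := ↑s
        fun_mem := fun {n} f => isEmptyElim f }
    haveI hSfin : Finite ↥S := Set.Finite.to_subtype s.finite_toSet
    have hSfg : S.FG := Substructure.FG.of_finite
    -- a `χ₂`-monochromatic copy of `S`
    obtain ⟨gC, hgC⟩ := ih2 ↥S hSfin ⟨S.subtype⟩ χ₂ ⟨N, emb, eb, hd₂⟩
    -- extend to an automorphism `α` of `M` sending `S` onto the copy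
    obtain ⟨α, hα⟩ := hM S hSfg gC
    -- the `α`-twisted colouring, externally definable by `φ₁`
    let αE : M ↪ₑ[L] M := ⟨α, fun _ θ x => StrongHomClass.realize_formula α θ⟩
    set χ₁' : (A ↪[L] M) → Fin 2 := fun f =>
      if φ₁.Realize (Sum.elim eb fun a => emb (α (f a))) then 0 else 1 with hχ₁'def
    have hd₁' : ∀ f, (χ₁' f = 0 ↔ φ₁.Realize (Sum.elim eb fun a => emb (α (f a)))) := by
      intro f
      by_cases hr : φ₁.Realize (Sum.elim eb fun a => emb (α (f a))) <;> simp [hχ₁'def, hr]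
    have hdef₁' : ExtDefinableBy2 L M A φ₁ χ₁' := ⟨N, emb.comp αE, eb, fun f => hd₁' f⟩
    obtain ⟨g, hgs, hgm⟩ := hs χ₁' hdef₁'
    -- the monochromatic copy of `B` is `α ∘ g`
    refine ⟨α.toEmbedding.comp g, fun f₁ f₂ hf₁ hf₂ => ?_⟩
    have hcomp : ((α.toEmbedding.comp g : B ↪[L] M) : B → M) = ⇑α ∘ (g : B → M) := rfl
    have hrange : Set.range ((α.toEmbedding.comp g : B ↪[L] M) : B → M) =
        ⇑α '' Set.range (g : B → M) := by
      rw [hcomp, Set.range_comp]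
    have hrangeC : Set.range (gC : ↥S → M) = ⇑α '' (↑s : Set M) := by
      rw [hα]
      ext x
      constructor
      · rintro ⟨y, rfl⟩
        exact ⟨y.1, y.2, rfl⟩
      · rintro ⟨z, hz, rfl⟩
        exact ⟨⟨z, hz⟩, rfl⟩
    -- `χ₂` is constant on the copy
    have h2const : χ₂ f₁ = χ₂ f₂ := by
      refine hgC f₁ f₂ ?_ ?_ <;>
        · rw [hrangeC]
          refine subset_trans (by assumption) ?_
          rw [hrange]
          exact Set.image_mono hgs
    -- `χ₁` is constant on the copy, via the twisted colouring
    have h1const : χ₁ f₁ = χ₁ f₂ := by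
      have key : ∀ f : A ↪[L] M, Set.range (f : A → M) ⊆
          Set.range ((α.toEmbedding.comp g : B ↪[L] M) : B → M) →
          Set.range ((α.symm.toEmbedding.comp f : A ↪[L] M) : A → M) ⊆
            Set.range (g : B → M) := by
        intro f hf
        have hcomp₁ : ((α.symm.toEmbedding.comp f : A ↪[L] M) : A → M) =
            ⇑α.symm ∘ (f : A → M) := rfl
        rw [hcomp₁, Set.range_comp]
        rw [hrange] at hf
        intro x hx
        obtain ⟨y, hy, rfl⟩ := hx
        obtain ⟨z, hz, hzy⟩ := hf hy
        rw [← hzy]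
        simpa using hz
      have e12 := hgm (α.symm.toEmbedding.comp f₁) (α.symm.toEmbedding.comp f₂)
        (key f₁ hf₁) (key f₂ hf₂)
      have ht : ∀ f : A ↪[L] M, χ₁' (α.symm.toEmbedding.comp f) = χ₁ f := by
        intro f
        refine fin2_eq_of_iff ?_
        rw [hd₁' _, hd₁ f]
        have harg : (Sum.elim eb fun a => emb (α ((α.symm.toEmbedding.comp f) a))) =
            (Sum.elim eb fun a => emb (f a)) := by
          funext i
          rcases i with i | a
          · rfl
          · simp only [Sum.elim_inr]
            congr 1
            have : (α.symm.toEmbedding.comp f) a = α.symm (f a) := rfl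
            rw [this]
            simp
        rw [harg]
      rw [← ht f₁, ← ht f₂, e12]
    exact fin2_eq_of_iff (by rw [hcc f₁, hcc f₂, h1const, h2const])

end EDRP
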